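/- For the fermionic-anyon matrices on (ℂ²)^{⊗m} and any two modes i < j, the beam-splitter Hamiltonian H = ξᵢ†ξⱼ + ξⱼ†ξᵢ satisfies H³ = H. -/

import Mathlib

open scoped BigOperators
open Matrix

/-- `σ = [[0,1],[0,0]]`, the single-mode annihilation matrix. -/
def sigMat : Matrix (Fin 2) (Fin 2) ℂ := !![0, 1; 0, 0]

/-- `D = diag(1, −e^{iφ})`, the Jordan–Wigner string matrix. -/
noncomputable def dMat (φ : ℝ) : Matrix (Fin 2) (Fin 2) ℂ :=
  !![1, 0; 0, -Complex.exp (Complex.I * φ)]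

/-- The fermionic-anyon annihilation matrix `ξᵢ = D^{⊗(i−1)} ⊗ σ ⊗ I₂^{⊗(m−i)}` on
`(ℂ²)^{⊗m}`, realized entrywise on tensor indices `Fin m → Fin 2`. -/
noncomputable def xi (m : ℕ) (φ : ℝ) (i : Fin m) :
    Matrix (Fin m → Fin 2) (Fin m → Fin 2) ℂ :=
  Matrix.of fun r c => ∏ k : Fin m,
    if k < i then dMat φ (r k) (c k)
    else if k = i then sigMat (r k) (c k)
    else if r k = c k then 1 else 0

/-- Entrywise tensor (Kronecker) product of a family of 2×2 matrices. -/
def tMat (m : ℕ) (f : Fin m → Matrix (Fin 2) (Fin 2) ℂ) :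
    Matrix (Fin m → Fin 2) (Fin m → Fin 2) ℂ :=
  Matrix.of fun r c => ∏ k : Fin m, f k (r k) (c k)

lemma tMat_mul (m : ℕ) (f g : Fin m → Matrix (Fin 2) (Fin 2) ℂ) :
    tMat m f * tMat m g = tMat m (fun k => f k * g k) := by
  ext r c
  simp only [tMat, Matrix.mul_apply, Matrix.of_apply, ← Finset.prod_mul_distrib]
  rw [Fintype.prod_sum]

lemma tMat_conjT (m : ℕ) (f : Fin m → Matrix (Fin 2) (Fin 2) ℂ) :
    (tMat m f)ᴴ = tMat m (fun k => (f k)ᴴ) := by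
  ext r c
  simp only [tMat, Matrix.conjTranspose_apply, Matrix.of_apply]
  rw [star_prod]

lemma tMat_zero (m : ℕ) (f : Fin m → Matrix (Fin 2) (Fin 2) ℂ) (k0 : Fin m)
    (h : f k0 = 0) : tMat m f = 0 := by
  ext r c
  exact Finset.prod_eq_zero (Finset.mem_univ k0) (by simp [h])

/-- The factor family of `xi`. -/
noncomputable def fa (m : ℕ) (φ : ℝ) (i : Fin m) : Fin m → Matrix (Fin 2) (Fin 2) ℂ :=
  fun k => if k < i then dMat φ else if k = i then sigMat else 1

lemma xi_eq (m : ℕ) (φ : ℝ) (i : Fin m) : xi m φ i = tMat m (fa m φ i) := by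
  ext r c
  simp only [xi, tMat, Matrix.of_apply]
  refine Finset.prod_congr rfl fun k _ => ?_
  simp only [fa]
  split_ifs <;> simp_all [Matrix.one_apply]

lemma dHd (φ : ℝ) : (dMat φ)ᴴ * dMat φ = 1 := by
  have h : (starRingEnd ℂ) (Complex.exp (Complex.I * φ)) * Complex.exp (Complex.I * φ) = 1 := by
    rw [← Complex.exp_conj, ← Complex.exp_add]
    simp [Complex.conj_I]
  ext a b
  fin_cases a <;> fin_cases b <;>
    simp [dMat, Matrix.mul_apply, Fin.sum_univ_two, Matrix.conjTranspose_apply,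
      Matrix.one_apply, h]

lemma dDh (φ : ℝ) : dMat φ * (dMat φ)ᴴ = 1 := by
  have h : Complex.exp (Complex.I * φ) * (starRingEnd ℂ) (Complex.exp (Complex.I * φ)) = 1 := by
    rw [← Complex.exp_conj, ← Complex.exp_add]
    simp [Complex.conj_I]
  ext a b
  fin_cases a <;> fin_cases b <;>
    simp [dMat, Matrix.mul_apply, Fin.sum_univ_two, Matrix.conjTranspose_apply,
      Matrix.one_apply, h]

lemma shc : sigMatᴴ = !![0, 0; 1, 0] := by
  ext a b
  fin_cases a <;> fin_cases b <;> simp [sigMat, Matrix.conjTranspose_apply]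

lemma ss : sigMat * sigMat = 0 := by
  rw [show sigMat = !![0,1;0,0] from rfl]
  norm_num [Matrix.mul_fin_two]
  ext a b; fin_cases a <;> fin_cases b <;> rfl

lemma shsh : sigMatᴴ * sigMatᴴ = 0 := by
  rw [← Matrix.conjTranspose_mul, ss, Matrix.conjTranspose_zero]

lemma shs : sigMatᴴ * sigMat = !![0,0;0,1] := by
  rw [shc, show sigMat = !![0,1;0,0] from rfl]
  norm_num [Matrix.mul_fin_two]
  ext a; fin_cases a <;> rfl

lemma ssh : sigMat * sigMatᴴ = !![1,0;0,0] := by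
  rw [shc, show sigMat = !![0,1;0,0] from rfl]
  norm_num [Matrix.mul_fin_two]
  ext a; fin_cases a <;> rfl

lemma shssh : sigMatᴴ * sigMat * sigMatᴴ = sigMatᴴ := by
  rw [shs, shc]
  norm_num [Matrix.mul_fin_two]
  ext a; fin_cases a <;> rfl

lemma sshs : sigMat * sigMatᴴ * sigMat = sigMat := by
  rw [ssh, show sigMat = !![0,1;0,0] from rfl]
  norm_num [Matrix.mul_fin_two]
  ext a; fin_cases a <;> rfl

/-- **The fermionic-anyon beam-splitter Hamiltonian is tripotent.** For any two modes
`i < j`, the Hamiltonian `H = ξᵢ†ξⱼ + ξⱼ†ξᵢ` satisfies `H³ = H` (a consequence of the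
Pauli exclusion principle). -/
theorem fermionic_anyon_bs_hamiltonian_tripotent (m : ℕ) (φ : ℝ) (i j : Fin m)
    (hij : i < j) :
    ((xi m φ i)ᴴ * xi m φ j + (xi m φ j)ᴴ * xi m φ i) ^ 3
      = (xi m φ i)ᴴ * xi m φ j + (xi m φ j)ᴴ * xi m φ i := by
  rw [xi_eq m φ i, xi_eq m φ j, tMat_conjT, tMat_conjT, tMat_mul, tMat_mul]
  set a : Fin m → Matrix (Fin 2) (Fin 2) ℂ := fun k => (fa m φ i k)ᴴ * fa m φ j k with ha
  set b : Fin m → Matrix (Fin 2) (Fin 2) ℂ := fun k => (fa m φ j k)ᴴ * fa m φ i k with hb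
  have hnlt : ¬ (j < i) := not_lt.2 hij.le
  have hne : (j : Fin m) ≠ i := (ne_of_lt hij).symm
  have hfaij : fa m φ i j = 1 := by simp [fa, hnlt, hne]
  have hfajj : fa m φ j j = sigMat := by simp [fa]
  have haj : a j = sigMat := by rw [ha]; simp only [hfaij, hfajj, Matrix.conjTranspose_one, one_mul]
  have hbj : b j = sigMatᴴ := by rw [hb]; simp only [hfaij, hfajj, mul_one]
  have hA2 : tMat m a * tMat m a = 0 := by
    rw [tMat_mul]
    exact tMat_zero m _ j (by rw [haj, ss])
  have hB2 : tMat m b * tMat m b = 0 := by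
    rw [tMat_mul]
    exact tMat_zero m _ j (by rw [hbj, shsh])
  have key : ∀ k : Fin m, (a k * b k * a k = a k) ∧ (b k * a k * b k = b k) := by
    intro k
    by_cases h1 : k < i
    · have h2 : k < j := h1.trans hij
      have h3 : (k : Fin m) ≠ i := ne_of_lt h1
      have hak : a k = 1 := by rw [ha]; simp only [fa, if_pos h1, if_pos h2, dHd]
      have hbk : b k = 1 := by rw [hb]; simp only [fa, if_pos h1, if_pos h2, dHd]
      rw [hak, hbk]; simp
    · by_cases h2 : k = i
      · have h3 : k < j := h2 ▸ hij
        have hak : a k = sigMatᴴ * dMat φ := by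
          rw [ha]; simp only [fa, if_neg h1, if_pos h2, if_pos h3]
        have hbk : b k = (dMat φ)ᴴ * sigMat := by
          rw [hb]; simp only [fa, if_neg h1, if_pos h2, if_pos h3]
        have e1 : sigMatᴴ * dMat φ * ((dMat φ)ᴴ * sigMat) = sigMatᴴ * sigMat := by
          rw [mul_assoc, ← mul_assoc (dMat φ), dDh, one_mul]
        constructor
        · rw [hak, hbk, e1, ← mul_assoc, shssh]
        · rw [hak, hbk, mul_assoc ((dMat φ)ᴴ * sigMat), e1, mul_assoc (dMat φ)ᴴ sigMat,
            ← mul_assoc sigMat sigMatᴴ sigMat, sshs]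
      · by_cases h3 : k < j
        · have hak : a k = dMat φ := by
            rw [ha]; simp only [fa, if_neg h1, if_neg h2, if_pos h3,
              Matrix.conjTranspose_one, one_mul]
          have hbk : b k = (dMat φ)ᴴ := by
            rw [hb]; simp only [fa, if_neg h1, if_neg h2, if_pos h3, mul_one]
          rw [hak, hbk]
          constructor
          · rw [dDh, one_mul]
          · rw [mul_assoc, dDh, mul_one]
        · by_cases h4 : k = j
          · have hak : a k = sigMat := h4 ▸ haj
            have hbk : b k = sigMatᴴ := h4 ▸ hbj
            rw [hak, hbk]
            exact ⟨sshs, shssh⟩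
          · have hak : a k = 1 := by
              rw [ha]; simp only [fa, if_neg h1, if_neg h2, if_neg h3, if_neg h4,
                Matrix.conjTranspose_one, one_mul]
            have hbk : b k = 1 := by
              rw [hb]; simp only [fa, if_neg h1, if_neg h2, if_neg h3, if_neg h4,
                Matrix.conjTranspose_one, mul_one]
            rw [hak, hbk]; simp
  have hABA : tMat m a * tMat m b * tMat m a = tMat m a := by
    rw [tMat_mul, tMat_mul]
    exact congrArg (tMat m) (funext fun k => (key k).1)
  have hBAB : tMat m b * tMat m a * tMat m b = tMat m b := by
    rw [tMat_mul, tMat_mul]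
    exact congrArg (tMat m) (funext fun k => (key k).2)
  set A := tMat m a
  set B := tMat m b
  have h1 : (A + B) * (A + B) = A * B + B * A := by
    rw [mul_add, add_mul, add_mul, hA2, hB2, zero_add, add_zero, add_comm]
  calc (A + B) ^ 3 = (A + B) * (A + B) * (A + B) := by
        rw [pow_succ, pow_succ, pow_one]
    _ = (A * B + B * A) * (A + B) := by rw [h1]
    _ = A * B * A + A * B * B + (B * A * A + B * A * B) := by
        rw [add_mul, mul_add, mul_add]
    _ = A + B := by
        rw [mul_assoc A B B, hB2, mul_zero, add_zero, mul_assoc B A A, hA2, mul_zero,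
          zero_add, hABA, hBAB]
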